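/- Every element of GL(2,ℤ) of trace 0, determinant -1, and having 1 as an eigenvalue is an involution, and is conjugate in GL(2,ℤ) to either diag(1,-1) or the matrix [[0,1],[1,0]]. -/

import Mathlib

set_option maxHeartbeats 1000000 in
theorem trace_zero_det_neg_one_involution (A : GL (Fin 2) ℤ)
    (htr : A.val.trace = 0) (hdet : A.val.det = -1)
    (hev : ∃ v : Fin 2 → ℤ, v ≠ 0 ∧ A.val.mulVec v = v) :
    A ^ 2 = 1 ∧
      ∃ P : GL (Fin 2) ℤ,
        P.val * A.val * (↑P⁻¹ : Matrix (Fin 2) (Fin 2) ℤ) = !![1, 0; 0, -1] ∨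
        P.val * A.val * (↑P⁻¹ : Matrix (Fin 2) (Fin 2) ℤ) = !![0, 1; 1, 0] := by
  obtain ⟨v, hv, hAv⟩ := hev
  rw [Matrix.trace_fin_two] at htr
  rw [Matrix.det_fin_two] at hdet
  set a := A.val 0 0 with ha
  set b := A.val 0 1 with hb
  set c := A.val 1 0 with hc
  set d := A.val 1 1 with hd
  have hA : A.val = !![a, b; c, d] := Matrix.eta_fin_two A.val
  -- Part 1: A^2 = 1
  have hsq : A.val * A.val = 1 := by
    rw [hA]
    ext i j
    fin_cases i <;> fin_cases j <;>
      simp [Matrix.mul_apply, Fin.sum_univ_two, Matrix.one_apply]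
    · linear_combination a * htr - hdet
    · linear_combination b * htr
    · linear_combination c * htr
    · linear_combination d * htr - hdet
  have hsqA : A ^ 2 = 1 := by
    apply Units.ext
    rw [Units.val_pow_eq_pow_val, pow_two, hsq, Units.val_one]
  refine ⟨hsqA, ?_⟩
  -- primitive eigenvector
  set g : ℕ := Int.gcd (v 0) (v 1) with hgdef
  have hg0 : g ≠ 0 := by
    intro h
    obtain ⟨h1, h2⟩ := Int.gcd_eq_zero_iff.mp h
    apply hv; funext i; fin_cases i <;> assumption
  have hg : (g : ℤ) ≠ 0 := Int.natCast_ne_zero.mpr hg0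
  obtain ⟨p, hp⟩ : (g : ℤ) ∣ v 0 := Int.gcd_dvd_left _ _
  obtain ⟨q, hq⟩ : (g : ℤ) ∣ v 1 := Int.gcd_dvd_right _ _
  have h0 := congrFun hAv 0
  have h1 := congrFun hAv 1
  simp [hA, Matrix.mulVec, dotProduct, Fin.sum_univ_two] at h0 h1
  have hE0 : a * p + b * q = p := by
    apply mul_left_cancel₀ hg
    linear_combination h0 - (a - 1) * hp - b * hq
  have hE1 : c * p + d * q = q := by
    apply mul_left_cancel₀ hg
    linear_combination h1 - c * hp - (d - 1) * hq
  have hcop : IsCoprime p q := by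
    rw [Int.isCoprime_iff_gcd_eq_one]
    have key : g * Int.gcd p q = g := by
      have := Int.gcd_mul_left (g : ℤ) p q
      rw [← hp, ← hq] at this
      simpa [hgdef] using this.symm
    exact Nat.eq_of_mul_eq_mul_left (Nat.pos_of_ne_zero hg0) (by omega)
  obtain ⟨x, y, hxy⟩ := hcop
  set M : Matrix (Fin 2) (Fin 2) ℤ := !![p, -y; q, x] with hM
  set M' : Matrix (Fin 2) (Fin 2) ℤ := !![x, y; -q, p] with hM'
  have hM'M : M' * M = 1 := by
    rw [hM, hM']
    ext i j
    fin_cases i <;> fin_cases j <;>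
      simp [Matrix.mul_apply, Fin.sum_univ_two, Matrix.one_apply] <;>
      linarith [hxy]
  have hMM' : M * M' = 1 := by
    rw [hM, hM']
    ext i j
    fin_cases i <;> fin_cases j <;>
      simp [Matrix.mul_apply, Fin.sum_univ_two, Matrix.one_apply] <;>
      linarith [hxy]
  obtain ⟨m, hm⟩ : ∃ m : ℤ, m = x * (b * x - a * y) + y * (d * x - c * y) := ⟨_, rfl⟩
  have hN : M' * A.val * M = !![1, m; 0, -1] := by
    rw [hM, hM', hA]
    ext i j
    fin_cases i <;> fin_cases j <;>
      simp [Matrix.mul_apply, Fin.sum_univ_two]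
    · linear_combination x * hE0 + y * hE1 + hxy
    · linear_combination -hm
    · linear_combination (-q) * hE0 + p * hE1
    · linear_combination (-x) * hE0 - y * hE1 + (p * x + q * y) * htr - hxy
  rcases Int.even_or_odd m with ⟨t, ht⟩ | ⟨t, ht⟩
  · -- even: conjugate to diag(1,-1)
    set Cm : Matrix (Fin 2) (Fin 2) ℤ := !![1, t; 0, 1] with hCm
    set Ci : Matrix (Fin 2) (Fin 2) ℤ := !![1, -t; 0, 1] with hCi
    have hCmCi : Cm * Ci = 1 := by
      rw [hCm, hCi]; ext i j; fin_cases i <;> fin_cases j <;>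
        simp [Matrix.mul_apply, Fin.sum_univ_two, Matrix.one_apply]
    have hCiCm : Ci * Cm = 1 := by
      rw [hCm, hCi]; ext i j; fin_cases i <;> fin_cases j <;>
        simp [Matrix.mul_apply, Fin.sum_univ_two, Matrix.one_apply]
    have h1' : (Cm * M') * (M * Ci) = 1 := by
      rw [mul_assoc, ← mul_assoc M', hM'M, one_mul, hCmCi]
    have h2' : (M * Ci) * (Cm * M') = 1 := by
      rw [mul_assoc, ← mul_assoc Ci, hCiCm, one_mul, hMM']
    refine ⟨⟨Cm * M', M * Ci, h1', h2'⟩, Or.inl ?_⟩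
    show (Cm * M') * A.val * (M * Ci) = _
    have hgrp : (Cm * M') * A.val * (M * Ci) = Cm * (M' * A.val * M) * Ci := by
      simp only [Matrix.mul_assoc]
    rw [hgrp, hN, hCm, hCi]
    ext i j
    fin_cases i <;> fin_cases j <;>
      simp [Matrix.mul_apply, Fin.sum_univ_two]
    all_goals first
      | linear_combination -2 * ht
      | linear_combination -ht
      | linear_combination ht
      | linear_combination 2 * ht
      | linear_combination ht + hm
      | linear_combination ht - hm
      | linear_combination -ht + hm
      | linear_combination -ht - hm
      | linear_combination 2 * ht + hm
      | linear_combination -2 * ht - hm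
      | linear_combination -2 * ht + hm
      | linear_combination 2 * ht - hm
      | ring
  · -- odd: conjugate to [[0,1],[1,0]]
    set Cm : Matrix (Fin 2) (Fin 2) ℤ := !![1, t; 1, t + 1] with hCm
    set Ci : Matrix (Fin 2) (Fin 2) ℤ := !![1 + t, -t; -1, 1] with hCi
    have hCmCi : Cm * Ci = 1 := by
      rw [hCm, hCi]; ext i j; fin_cases i <;> fin_cases j <;>
        simp [Matrix.mul_apply, Fin.sum_univ_two, Matrix.one_apply] <;> ring
    have hCiCm : Ci * Cm = 1 := by
      rw [hCm, hCi]; ext i j; fin_cases i <;> fin_cases j <;>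
        simp [Matrix.mul_apply, Fin.sum_univ_two, Matrix.one_apply] <;> ring
    have h1' : (Cm * M') * (M * Ci) = 1 := by
      rw [mul_assoc, ← mul_assoc M', hM'M, one_mul, hCmCi]
    have h2' : (M * Ci) * (Cm * M') = 1 := by
      rw [mul_assoc, ← mul_assoc Ci, hCiCm, one_mul, hMM']
    refine ⟨⟨Cm * M', M * Ci, h1', h2'⟩, Or.inr ?_⟩
    show (Cm * M') * A.val * (M * Ci) = _
    have hgrp : (Cm * M') * A.val * (M * Ci) = Cm * (M' * A.val * M) * Ci := by
      simp only [Matrix.mul_assoc]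
    rw [hgrp, hN, hCm, hCi]
    ext i j
    fin_cases i <;> fin_cases j <;>
      simp [Matrix.mul_apply, Fin.sum_univ_two]
    all_goals first
      | linear_combination -2 * ht
      | linear_combination -ht
      | linear_combination ht
      | linear_combination 2 * ht
      | linear_combination ht + hm
      | linear_combination ht - hm
      | linear_combination -ht + hm
      | linear_combination -ht - hm
      | linear_combination 2 * ht + hm
      | linear_combination -2 * ht - hm
      | linear_combination -2 * ht + hm
      | linear_combination 2 * ht - hm
      | ring
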